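/- Fix integers n ≥ 1 and j ≥ 2 and let π' be a j-balanced set partition of {1,…,n} × {1,…,j}. Then the number of (j−1)-tuples (σ_2,…,σ_j) of permutations of {1,…,n} such that, for every m ∈ {1,…,n} and every i ∈ {2,…,j}, the elements (m,1) and (σ_i(m), i) lie in the same block of π', equals ∏_{b ∈ π'} ((#b/j)!)^{j−1}. -/

import Mathlib

open Finset in
/-- Permutations intertwining `f` and `g` correspond to families of fiber equivalences. -/
def permFiberEquiv {α β : Type*} [DecidableEq β] (f g : α → β) :
    {σ : Equiv.Perm α // ∀ x, g (σ x) = f x} ≃ ∀ y, {x // f x = y} ≃ {x // g x = y} where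
  toFun σ y :=
    { toFun := fun u => ⟨σ.1 u.1, by rw [σ.2, u.2]⟩
      invFun := fun v => ⟨σ.1.symm v.1, by
        have h := σ.2 (σ.1.symm v.1); rw [Equiv.apply_symm_apply] at h
        rw [← h, v.2]⟩
      left_inv := fun u => Subtype.ext (σ.1.symm_apply_apply u.1)
      right_inv := fun v => Subtype.ext (σ.1.apply_symm_apply v.1) }
  invFun F := ⟨(Equiv.sigmaFiberEquiv f).symm.trans
      ((Equiv.sigmaCongrRight F).trans (Equiv.sigmaFiberEquiv g)),
    fun x => ((F (f x)) ⟨x, rfl⟩).2⟩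
  left_inv σ := by ext x; rfl
  right_inv F := by
    funext y; ext u
    obtain ⟨x, rfl⟩ := u
    rfl

open Finset in
/-- The number of permutations intertwining `f` and `g` is the product of factorials of the
fiber cardinalities, provided corresponding fibers have the same size. -/
theorem card_perm_fiber {α β : Type*} [Fintype α] [DecidableEq α] [Fintype β] [DecidableEq β]
    (f g : α → β) (h : ∀ y, Fintype.card {x // f x = y} = Fintype.card {x // g x = y}) :
    Nat.card {σ : Equiv.Perm α // ∀ x, g (σ x) = f x}
      = ∏ y, (Fintype.card {x // f x = y}).factorial := by
  rw [Nat.card_congr (permFiberEquiv f g), Nat.card_pi]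
  refine Finset.prod_congr rfl fun y _ => ?_
  rw [Nat.card_eq_fintype_card, Fintype.card_equiv (Fintype.equivOfCardEq (h y))]

/-- A set partition of `{1,…,n} × {1,…,j}` is `j`-balanced if every block contains an
equal number of elements of each of the `j` types (the type of an element being its
second coordinate). -/
def IsBalanced {n j : ℕ} (π : Finpartition (Finset.univ : Finset (Fin n × Fin j))) : Prop :=
  ∀ b ∈ π.parts, ∀ t t' : Fin j,
    (b.filter fun p => p.2 = t).card = (b.filter fun p => p.2 = t').card

open Finset in
/-- For a `j`-balanced set partition `π'` of `{1,…,n} × {1,…,j}` the number of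
`(j−1)`-tuples `(σ_2,…,σ_j)` of permutations of `{1,…,n}` such that `(m,1)` and
`(σ_i(m),i)` always lie in the same block of `π'` is `∏_{b∈π'} ((#b/j)!)^{j−1}`. -/
theorem card_matchings_of_balanced (n j : ℕ) (hn : 1 ≤ n) (hj : 2 ≤ j)
    (π' : Finpartition (Finset.univ : Finset (Fin n × Fin j))) (hπ' : IsBalanced π') :
    Nat.card {σ : Fin (j - 1) → Equiv.Perm (Fin n) //
        ∀ m : Fin n, ∀ i : Fin (j - 1), ∃ b ∈ π'.parts,
          (m, (⟨0, by omega⟩ : Fin j)) ∈ b ∧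
            (σ i m, (⟨i.1 + 1, by have := i.2; omega⟩ : Fin j)) ∈ b} =
      ∏ b ∈ π'.parts, (Nat.factorial (b.card / j)) ^ (j - 1) := by
  classical
  have hj0 : 0 < j := by omega
  set t0 : Fin j := ⟨0, by omega⟩ with ht0
  -- fiber cardinality
  have hfib : ∀ t : Fin j, ∀ b ∈ π'.parts,
      Fintype.card {m : Fin n // π'.part (m, t) = b} = b.card / j := by
    intro t b hb
    have hc : Fintype.card {m : Fin n // π'.part (m, t) = b}
        = (b.filter fun p => p.2 = t).card := by
      rw [Fintype.card_subtype]
      refine Finset.card_bij (fun m _ => (m, t)) ?_ ?_ ?_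
      · intro m hm
        simp only [mem_filter, mem_univ, true_and] at hm ⊢
        exact ⟨hm ▸ π'.mem_part (mem_univ _), trivial⟩
      · intro a _ b _ hab
        exact (Prod.mk.injEq _ _ _ _ ▸ hab).1
      · intro p hp
        simp only [mem_filter] at hp
        refine ⟨p.1, ?_, ?_⟩
        · simp only [mem_filter, mem_univ, true_and]
          have : (p.1, t) = p := by rw [← hp.2]
          rw [this]
          exact π'.part_eq_of_mem hb hp.1
        · exact (Prod.ext rfl hp.2.symm)
    rw [hc]
    -- balancedness: each fiber has size b.card / j
    have hsum : ∑ t' : Fin j, (b.filter fun p => p.2 = t').card = b.card :=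
      (Finset.card_eq_sum_card_fiberwise (f := Prod.snd) fun x _ => mem_univ x.2).symm
    have hall : ∀ t' : Fin j, (b.filter fun p => p.2 = t').card
        = (b.filter fun p => p.2 = t).card := fun t' => hπ' b hb t' t
    rw [Finset.sum_congr rfl fun t' _ => hall t', Finset.sum_const, card_univ,
      Fintype.card_fin, smul_eq_mul] at hsum
    rw [← hsum, Nat.mul_div_cancel_left _ hj0]
  -- condition rewrite
  have hcond : ∀ (x y : Fin n × Fin j),
      (∃ b ∈ π'.parts, x ∈ b ∧ y ∈ b) ↔ π'.part y = π'.part x := by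
    intro x y
    constructor
    · rintro ⟨b, hb, hx, hy⟩
      rw [π'.part_eq_of_mem hb hy, π'.part_eq_of_mem hb hx]
    · intro h
      exact ⟨π'.part x, π'.part_mem.2 (mem_univ x), π'.mem_part (mem_univ x),
        h ▸ π'.mem_part (mem_univ y)⟩
  -- split over i
  have e1 : {σ : Fin (j - 1) → Equiv.Perm (Fin n) //
        ∀ m : Fin n, ∀ i : Fin (j - 1), ∃ b ∈ π'.parts,
          (m, (⟨0, by omega⟩ : Fin j)) ∈ b ∧
            (σ i m, (⟨i.1 + 1, by have := i.2; omega⟩ : Fin j)) ∈ b} ≃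
      ∀ i : Fin (j - 1), {τ : Equiv.Perm (Fin n) // ∀ x : Fin n,
        π'.part (τ x, (⟨i.1 + 1, by have := i.2; omega⟩ : Fin j)) = π'.part (x, t0)} := by
    refine (Equiv.subtypeEquivRight fun σ => ?_).trans (Equiv.subtypePiEquivPi)
    constructor
    · intro h i m
      exact (hcond _ _).1 ⟨_, (h m i).choose_spec.1, (h m i).choose_spec.2.1,
        (h m i).choose_spec.2.2⟩
    · intro h m i
      exact (hcond (m, t0) _).2 (h i m)
  rw [Nat.card_congr e1, Nat.card_pi]
  have key : ∀ i : Fin (j - 1),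
      Nat.card {τ : Equiv.Perm (Fin n) // ∀ x : Fin n,
        π'.part (τ x, (⟨i.1 + 1, by have := i.2; omega⟩ : Fin j)) = π'.part (x, t0)}
      = ∏ b ∈ π'.parts, (b.card / j).factorial := by
    intro i
    set ti : Fin j := ⟨i.1 + 1, by have := i.2; omega⟩ with hti
    have hzero : ∀ (t : Fin j) (y : Finset (Fin n × Fin j)), y ∉ π'.parts →
        Fintype.card {m : Fin n // π'.part (m, t) = y} = 0 := by
      intro t y hy
      rw [Fintype.card_eq_zero_iff]
      exact ⟨fun ⟨m, hm⟩ => hy (hm ▸ π'.part_mem.2 (mem_univ _))⟩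
    rw [card_perm_fiber (fun m => π'.part (m, t0)) (fun m => π'.part (m, ti))
      (fun y => by
        by_cases hy : y ∈ π'.parts
        · rw [hfib t0 y hy, hfib ti y hy]
        · rw [hzero t0 y hy, hzero ti y hy])]
    rw [← Finset.prod_subset (Finset.subset_univ π'.parts)
      (fun y _ hy => by rw [hzero t0 y hy]; rfl)]
    exact Finset.prod_congr rfl fun b hb => by rw [hfib t0 b hb]
  rw [Finset.prod_congr rfl fun i _ => key i, Finset.prod_const, card_univ,
    Fintype.card_fin, ← Finset.prod_pow]
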